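/- Let μ1, μ2 be nonzero real numbers and set μ3 = μ1, μ4 = μ2, and let θ2 ∈ (0, 2π) with θ2 ≠ π. Then (0, θ2, π, θ2 + π) is a critical point of V if and only if θ2 = π/2 or θ2 = 3π/2. (With two pairs of equal circulations at opposite points, the only rectangular configuration is the square.) -/

import Mathlib

open Real Polynomial

/-- The potential `V` for the (1+4)-vortex problem with circulation
parameters `μ` and angular positions `θ`. -/
noncomputable def V (μ θ : Fin 4 → ℝ) : ℝ :=
  -∑ i : Fin 4, ∑ j ∈ Finset.Ioi i,
      μ i * μ j *
        (Real.cos (θ i - θ j) + (1 / 2) * Real.log (2 - 2 * Real.cos (θ i - θ j)))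

/-- The partial derivative `∂V/∂θ_k` at the point `θ`. -/
noncomputable def partialV (μ θ : Fin 4 → ℝ) (k : Fin 4) : ℝ :=
  deriv (fun t => V μ (Function.update θ k t)) (θ k)

/-- `θ` is a critical point of `V`: all four partial derivatives vanish. -/
def IsCriticalPt (μ θ : Fin 4 → ℝ) : Prop :=
  ∀ k : Fin 4, partialV μ θ k = 0

/-- The Hessian matrix of `V` at `θ`, `H k l = ∂²V/∂θ_k ∂θ_l`. -/
noncomputable def hessV (μ θ : Fin 4 → ℝ) : Matrix (Fin 4) (Fin 4) ℝ :=
  fun k l => deriv (fun t => partialV μ (Function.update θ k t) l) (θ k)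

noncomputable def Faux (d : ℝ) : ℝ := Real.cos d + (1/2) * Real.log (2 - 2 * Real.cos d)
noncomputable def Gaux (d : ℝ) : ℝ := -Real.sin d + Real.sin d / (2 - 2 * Real.cos d)

lemma V_expand (μ θ : Fin 4 → ℝ) : V μ θ =
    -(μ 0 * μ 1 * Faux (θ 0 - θ 1) + μ 0 * μ 2 * Faux (θ 0 - θ 2) + μ 0 * μ 3 * Faux (θ 0 - θ 3)
      + μ 1 * μ 2 * Faux (θ 1 - θ 2) + μ 1 * μ 3 * Faux (θ 1 - θ 3)
      + μ 2 * μ 3 * Faux (θ 2 - θ 3)) := by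
  rw [V, Fin.sum_univ_four,
    show (Finset.Ioi (0:Fin 4)) = {1,2,3} from by decide,
    show (Finset.Ioi (1:Fin 4)) = {2,3} from by decide,
    show (Finset.Ioi (2:Fin 4)) = {3} from by decide,
    show (Finset.Ioi (3:Fin 4)) = ∅ from by decide]
  simp [Faux, Finset.sum_insert, Finset.mem_insert]
  ring

lemma hasDerivAt_Faux {d : ℝ} (h : Real.cos d ≠ 1) : HasDerivAt Faux (Gaux d) d := by
  have h2 : (2 : ℝ) - 2 * Real.cos d ≠ 0 := by
    intro hc; apply h; linarith [sub_eq_zero.mp hc]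
  have hlog : HasDerivAt (fun x => Real.log (2 - 2 * Real.cos x))
      ((0 - 2 * (-Real.sin d)) / (2 - 2 * Real.cos d)) d := by
    exact (((hasDerivAt_const d (2:ℝ)).sub ((Real.hasDerivAt_cos d).const_mul 2))).log h2
  have := ((Real.hasDerivAt_cos d).add (hlog.const_mul (1/2)))
  refine this.congr_deriv ?_
  rw [Gaux]; field_simp; ring

lemma hasDerivAt_Faux_sub (a t : ℝ) (h : Real.cos (t - a) ≠ 1) :
    HasDerivAt (fun x => Faux (x - a)) (Gaux (t - a)) t := by
  have := (hasDerivAt_Faux h).comp t ((hasDerivAt_id t).sub_const a)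
  exact this.congr_deriv (mul_one _)

lemma hasDerivAt_Faux_csub (a t : ℝ) (h : Real.cos (a - t) ≠ 1) :
    HasDerivAt (fun x => Faux (a - x)) (-Gaux (a - t)) t := by
  have := (hasDerivAt_Faux h).comp t ((hasDerivAt_id t).const_sub a)
  exact this.congr_deriv (by ring)

/-- With two pairs of equal circulations, the only rectangular configuration
is the square: `theta2 = pi/2` or `theta2 = 3pi/2`. -/
theorem rectangle_equal_pairs_is_square (μ1 μ2 θ2 : ℝ)
    (h1 : μ1 ≠ 0) (h2 : μ2 ≠ 0)
    (hθ : θ2 ∈ Set.Ioo (0 : ℝ) (2 * π)) (hθπ : θ2 ≠ π) :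
    IsCriticalPt ![μ1, μ2, μ1, μ2] ![0, θ2, π, θ2 + π] ↔
      θ2 = π / 2 ∨ θ2 = 3 * π / 2 := by
  have hs : Real.sin θ2 ≠ 0 := by
    intro h
    rcases Real.sin_eq_zero_iff.mp h with ⟨n, hn⟩
    have hπ := Real.pi_pos
    have h0 : (0:ℝ) < n * π := hn ▸ hθ.1
    have h2' : (n:ℝ) * π < 2 * π := hn ▸ hθ.2
    have hn1 : (0:ℝ) < n := by nlinarith
    have hn2 : (n:ℝ) < 2 := by nlinarith
    have a : (0:ℤ) < n := by exact_mod_cast hn1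
    have b : (n:ℤ) < 2 := by exact_mod_cast hn2
    have : n = 1 := by omega
    apply hθπ; rw [← hn, this]; push_cast; ring
  have pyth := Real.sin_sq_add_cos_sq θ2
  have hc1 : Real.cos θ2 ≠ 1 := by
    intro h; rw [h] at pyth
    apply hs
    have hsq : Real.sin θ2 ^ 2 = 0 := by nlinarith
    exact pow_eq_zero_iff (n := 2) (by norm_num) |>.mp hsq
  have hc2 : Real.cos θ2 ≠ -1 := by
    intro h; rw [h] at pyth
    apply hs
    have hsq : Real.sin θ2 ^ 2 = 0 := by nlinarith
    exact pow_eq_zero_iff (n := 2) (by norm_num) |>.mp hsq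
  have h2m : (2:ℝ) - 2 * Real.cos θ2 ≠ 0 := by intro h; apply hc1; linarith
  have h2p : (2:ℝ) + 2 * Real.cos θ2 ≠ 0 := by intro h; apply hc2; linarith
  -- auxiliary cosine ≠ 1 facts
  have hA : Real.cos ((0:ℝ) - θ2) ≠ 1 := by simpa using hc1
  have hB : Real.cos ((0:ℝ) - π) ≠ 1 := by norm_num [Real.cos_pi]
  have hC : Real.cos ((0:ℝ) - (θ2 + π)) ≠ 1 := by
    simp only [zero_sub, Real.cos_neg, Real.cos_add_pi]
    intro h; apply hc2; linarith
  have hD : Real.cos (θ2 - π) ≠ 1 := by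
    rw [show θ2 - π = -(π - θ2) by ring, Real.cos_neg, Real.cos_pi_sub]
    intro h; apply hc2; linarith
  have hE : Real.cos (θ2 - (θ2 + π)) ≠ 1 := by norm_num [Real.cos_pi]
  have hF : Real.cos (π - (θ2 + π)) ≠ 1 := by
    rw [show π - (θ2 + π) = -θ2 by ring, Real.cos_neg]; exact hc1
  -- the four partial derivatives
  have p0 : partialV ![μ1, μ2, μ1, μ2] ![0, θ2, π, θ2 + π] 0
      = μ1 * μ2 * (Real.cos θ2 / Real.sin θ2) := by
    have hfun : (fun t => V ![μ1, μ2, μ1, μ2] (Function.update ![0, θ2, π, θ2 + π] 0 t))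
        = (fun t => -(μ1 * μ2 * Faux (t - θ2) + μ1 * μ1 * Faux (t - π)
            + μ1 * μ2 * Faux (t - (θ2 + π))
            + μ2 * μ1 * Faux (θ2 - π) + μ2 * μ2 * Faux (θ2 - (θ2 + π))
            + μ1 * μ2 * Faux (π - (θ2 + π)))) := by
      funext t
      rw [V_expand]
      simp [Function.update]
    have hd : HasDerivAt
        (fun t => -(μ1 * μ2 * Faux (t - θ2) + μ1 * μ1 * Faux (t - π)
            + μ1 * μ2 * Faux (t - (θ2 + π))
            + μ2 * μ1 * Faux (θ2 - π) + μ2 * μ2 * Faux (θ2 - (θ2 + π))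
            + μ1 * μ2 * Faux (π - (θ2 + π))))
        (-(μ1 * μ2 * Gaux ((0:ℝ) - θ2) + μ1 * μ1 * Gaux ((0:ℝ) - π)
            + μ1 * μ2 * Gaux ((0:ℝ) - (θ2 + π)) + 0 + 0 + 0)) 0 := by
      exact ((((((hasDerivAt_Faux_sub θ2 0 hA).const_mul (μ1*μ2)).add
        ((hasDerivAt_Faux_sub π 0 hB).const_mul (μ1*μ1))).add
        ((hasDerivAt_Faux_sub (θ2+π) 0 hC).const_mul (μ1*μ2))).add
        (hasDerivAt_const 0 _)).add (hasDerivAt_const 0 _)).add (hasDerivAt_const 0 _) |>.neg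
    rw [partialV, show (![0, θ2, π, θ2 + π] : Fin 4 → ℝ) 0 = 0 from rfl, hfun, hd.deriv]
    simp only [Gaux, zero_sub, Real.sin_neg, Real.cos_neg, Real.sin_pi, Real.cos_pi,
      Real.sin_add_pi, Real.cos_add_pi, neg_neg]
    have h1c : 1 + Real.cos θ2 ≠ 0 := by intro h; apply hc2; linarith
    have h1m : 1 - Real.cos θ2 ≠ 0 := by intro h; apply hc1; linarith
    norm_num
    field_simp
    linear_combination (2*Real.cos θ2) * pyth
  have p1 : partialV ![μ1, μ2, μ1, μ2] ![0, θ2, π, θ2 + π] 1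
      = -(μ1 * μ2 * (Real.cos θ2 / Real.sin θ2)) := by
    have hfun : (fun t => V ![μ1, μ2, μ1, μ2] (Function.update ![0, θ2, π, θ2 + π] 1 t))
        = (fun t => -(μ1 * μ2 * Faux (0 - t) + μ1 * μ1 * Faux (0 - π)
            + μ1 * μ2 * Faux (0 - (θ2 + π))
            + μ2 * μ1 * Faux (t - π) + μ2 * μ2 * Faux (t - (θ2 + π))
            + μ1 * μ2 * Faux (π - (θ2 + π)))) := by
      funext t
      rw [V_expand]
      simp [Function.update]
    have hd : HasDerivAt
        (fun t => -(μ1 * μ2 * Faux (0 - t) + μ1 * μ1 * Faux (0 - π)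
            + μ1 * μ2 * Faux (0 - (θ2 + π))
            + μ2 * μ1 * Faux (t - π) + μ2 * μ2 * Faux (t - (θ2 + π))
            + μ1 * μ2 * Faux (π - (θ2 + π))))
        (-(μ1 * μ2 * -Gaux ((0:ℝ) - θ2) + 0 + 0
            + μ2 * μ1 * Gaux (θ2 - π) + μ2 * μ2 * Gaux (θ2 - (θ2 + π)) + 0)) θ2 := by
      exact ((((((hasDerivAt_Faux_csub 0 θ2 hA).const_mul (μ1*μ2)).add
        (hasDerivAt_const θ2 _)).add (hasDerivAt_const θ2 _)).add
        ((hasDerivAt_Faux_sub π θ2 hD).const_mul (μ2*μ1))).add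
        ((hasDerivAt_Faux_sub (θ2+π) θ2 hE).const_mul (μ2*μ2))).add
        (hasDerivAt_const θ2 _) |>.neg
    rw [partialV, show (![0, θ2, π, θ2 + π] : Fin 4 → ℝ) 1 = θ2 from rfl, hfun, hd.deriv]
    simp only [Gaux, zero_sub, Real.sin_neg, Real.cos_neg, Real.sin_pi, Real.cos_pi,
      Real.sin_add_pi, Real.cos_add_pi, neg_neg,
      show θ2 - π = -(π - θ2) by ring, show θ2 - (θ2 + π) = -π by ring,
      Real.sin_pi_sub, Real.cos_pi_sub]
    have h1c : 1 + Real.cos θ2 ≠ 0 := by intro h; apply hc2; linarith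
    have h1m : 1 - Real.cos θ2 ≠ 0 := by intro h; apply hc1; linarith
    norm_num
    field_simp
    linear_combination (-2*Real.cos θ2) * pyth
  have p2 : partialV ![μ1, μ2, μ1, μ2] ![0, θ2, π, θ2 + π] 2
      = μ1 * μ2 * (Real.cos θ2 / Real.sin θ2) := by
    have hfun : (fun t => V ![μ1, μ2, μ1, μ2] (Function.update ![0, θ2, π, θ2 + π] 2 t))
        = (fun t => -(μ1 * μ2 * Faux (0 - θ2) + μ1 * μ1 * Faux (0 - t)
            + μ1 * μ2 * Faux (0 - (θ2 + π))
            + μ2 * μ1 * Faux (θ2 - t) + μ2 * μ2 * Faux (θ2 - (θ2 + π))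
            + μ1 * μ2 * Faux (t - (θ2 + π)))) := by
      funext t
      rw [V_expand]
      simp [Function.update]
    have hd : HasDerivAt
        (fun t => -(μ1 * μ2 * Faux (0 - θ2) + μ1 * μ1 * Faux (0 - t)
            + μ1 * μ2 * Faux (0 - (θ2 + π))
            + μ2 * μ1 * Faux (θ2 - t) + μ2 * μ2 * Faux (θ2 - (θ2 + π))
            + μ1 * μ2 * Faux (t - (θ2 + π))))
        (-(0 + μ1 * μ1 * -Gaux ((0:ℝ) - π) + 0
            + μ2 * μ1 * -Gaux (θ2 - π) + 0 + μ1 * μ2 * Gaux (π - (θ2 + π)))) π := by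
      exact (((((hasDerivAt_const π _).add
        ((hasDerivAt_Faux_csub 0 π hB).const_mul (μ1*μ1))).add
        (hasDerivAt_const π _)).add
        ((hasDerivAt_Faux_csub θ2 π hD).const_mul (μ2*μ1))).add
        (hasDerivAt_const π _)).add
        ((hasDerivAt_Faux_sub (θ2+π) π hF).const_mul (μ1*μ2)) |>.neg
    rw [partialV, show (![0, θ2, π, θ2 + π] : Fin 4 → ℝ) 2 = π from rfl, hfun, hd.deriv]
    simp only [Gaux, zero_sub, Real.sin_neg, Real.cos_neg, Real.sin_pi, Real.cos_pi,
      Real.sin_add_pi, Real.cos_add_pi, neg_neg,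
      show θ2 - π = -(π - θ2) by ring, show π - (θ2 + π) = -θ2 by ring,
      Real.sin_pi_sub, Real.cos_pi_sub]
    have h1c : 1 + Real.cos θ2 ≠ 0 := by intro h; apply hc2; linarith
    have h1m : 1 - Real.cos θ2 ≠ 0 := by intro h; apply hc1; linarith
    norm_num
    field_simp
    linear_combination (2*Real.cos θ2) * pyth
  have p3 : partialV ![μ1, μ2, μ1, μ2] ![0, θ2, π, θ2 + π] 3
      = -(μ1 * μ2 * (Real.cos θ2 / Real.sin θ2)) := by
    have hfun : (fun t => V ![μ1, μ2, μ1, μ2] (Function.update ![0, θ2, π, θ2 + π] 3 t))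
        = (fun t => -(μ1 * μ2 * Faux (0 - θ2) + μ1 * μ1 * Faux (0 - π)
            + μ1 * μ2 * Faux (0 - t)
            + μ2 * μ1 * Faux (θ2 - π) + μ2 * μ2 * Faux (θ2 - t)
            + μ1 * μ2 * Faux (π - t))) := by
      funext t
      rw [V_expand]
      simp [Function.update]
    have hd : HasDerivAt
        (fun t => -(μ1 * μ2 * Faux (0 - θ2) + μ1 * μ1 * Faux (0 - π)
            + μ1 * μ2 * Faux (0 - t)
            + μ2 * μ1 * Faux (θ2 - π) + μ2 * μ2 * Faux (θ2 - t)
            + μ1 * μ2 * Faux (π - t)))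
        (-(0 + 0 + μ1 * μ2 * -Gaux ((0:ℝ) - (θ2 + π))
            + 0 + μ2 * μ2 * -Gaux (θ2 - (θ2 + π))
            + μ1 * μ2 * -Gaux (π - (θ2 + π)))) (θ2 + π) := by
      exact (((((hasDerivAt_const (θ2+π) _).add
        (hasDerivAt_const (θ2+π) _)).add
        ((hasDerivAt_Faux_csub 0 (θ2+π) hC).const_mul (μ1*μ2))).add
        (hasDerivAt_const (θ2+π) _)).add
        ((hasDerivAt_Faux_csub θ2 (θ2+π) hE).const_mul (μ2*μ2))).add
        ((hasDerivAt_Faux_csub π (θ2+π) hF).const_mul (μ1*μ2)) |>.neg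
    rw [partialV, show (![0, θ2, π, θ2 + π] : Fin 4 → ℝ) 3 = θ2 + π from rfl, hfun, hd.deriv]
    simp only [Gaux, zero_sub, Real.sin_neg, Real.cos_neg, Real.sin_pi, Real.cos_pi,
      Real.sin_add_pi, Real.cos_add_pi, neg_neg,
      show θ2 - (θ2 + π) = -π by ring, show π - (θ2 + π) = -θ2 by ring]
    have h1c : 1 + Real.cos θ2 ≠ 0 := by intro h; apply hc2; linarith
    have h1m : 1 - Real.cos θ2 ≠ 0 := by intro h; apply hc1; linarith
    norm_num
    field_simp
    linear_combination (-2*Real.cos θ2) * pyth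
  constructor
  · intro h
    have h0 := h 0
    rw [p0] at h0
    have hcos : Real.cos θ2 = 0 := by
      field_simp [h1, h2] at h0
      rw [mul_zero] at h0
      rcases mul_eq_zero.mp h0 with h' | h'
      · exact absurd h' (mul_ne_zero h1 h2)
      · exact h'
    rcases Real.cos_eq_zero_iff.mp hcos with ⟨k, hk⟩
    have hπ := Real.pi_pos
    have hlo : (0:ℝ) < 2*k+1 := by
      by_contra hx; push_neg at hx
      have := hθ.1; rw [hk] at this; nlinarith
    have hhi : (2*(k:ℝ)+1) < 4 := by
      by_contra hx; push_neg at hx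
      have := hθ.2; rw [hk] at this; nlinarith
    have a : (0:ℤ) < 2*k+1 := by exact_mod_cast hlo
    have b : (2*k+1 : ℤ) < 4 := by exact_mod_cast hhi
    have : k = 0 ∨ k = 1 := by omega
    rcases this with hk0 | hk1
    · left; rw [hk, hk0]; push_cast; ring
    · right; rw [hk, hk1]; push_cast; ring
  · intro h
    have hcos : Real.cos θ2 = 0 := by
      rcases h with h | h
      · rw [h]; exact Real.cos_pi_div_two
      · rw [h, show (3*π/2 : ℝ) = π/2 + π by ring, Real.cos_add_pi, Real.cos_pi_div_two]; ring
    have z : μ1 * μ2 * (Real.cos θ2 / Real.sin θ2) = 0 := by rw [hcos]; simp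
    intro k
    fin_cases k
    · exact p0.trans z
    · exact p1.trans (by rw [z, neg_zero])
    · exact p2.trans z
    · exact p3.trans (by rw [z, neg_zero])
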